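/- Let m = kn + d be coprime to n with 1 ≤ d ≤ n−1 and k ≥ 1. Let σ be a word of n S's and m W's, and suppose there is a set R of m+n nonnegative integers with 0 ∈ R compatible with σ, with sorted sequence 𝔯_1<…<𝔯_{m+n}. Define positions f_0 = 1 and f_i = σ^{-1}(W_{f_{i−1}}) for 1 ≤ i ≤ k+1. Then the ranks 0, n, 2n, …, (k+1)n all belong to R, and 𝔯_{f_i} = i·n for 0 ≤ i ≤ k+1. -/

import Mathlib

/-- The list of ranks of the lattice points visited by a path (excluding the final
point), starting from rank `r`.  A `true` entry is a north (`u`) step, which adds `m`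
to the rank; a `false` entry is an east (`d`) step, which subtracts `n`. -/
def rankWalk (m n : ℤ) : List Bool → ℤ → List ℤ
  | [], _ => []
  | b :: bs, r => r :: rankWalk m n bs (r + if b then m else -n)

/-- An `(m,n)`-path: a word of `n` north steps (`true`) and `m` east steps (`false`). -/
def IsPathWord (m n : ℕ) (P : List Bool) : Prop :=
  P.length = m + n ∧ P.count true = n

/-- An `(m,n)`-Dyck path: an `(m,n)`-path all of whose ranks are nonnegative. -/
def IsDyckWord (m n : ℕ) (P : List Bool) : Prop :=
  IsPathWord m n P ∧ ∀ r ∈ rankWalk (m : ℤ) (n : ℤ) P 0, 0 ≤ r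

/-- The rank set of a path: the ranks of its `m+n` lattice points other than the endpoint. -/
def rankSet (m n : ℕ) (P : List Bool) : Finset ℤ :=
  (rankWalk (m : ℤ) (n : ℤ) P 0).toFinset

/-- `R` is the rank set of some `(m,n)`-path. -/
def IsRankSet (m n : ℕ) (R : Finset ℤ) : Prop :=
  ∃ P : List Bool, IsPathWord m n P ∧ rankSet m n P = R

/-- `R` is the rank set of some `(m,n)`-Dyck path. -/
def IsDyckRankSet (m n : ℕ) (R : Finset ℤ) : Prop :=
  ∃ P : List Bool, IsDyckWord m n P ∧ rankSet m n P = R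

/-- A set `R` of `m + n` nonnegative integers containing `0`, with sorted sequence
`𝔯_1 < ⋯ < 𝔯_{m+n}`, is compatible with the word `σ` (where `true` = `S`, `false` = `W`)
if `𝔯_{σ⁻¹(S_i)} + m ∈ R` for all `i` and `𝔯_{σ⁻¹(W_j)} - n ∈ R` for all `j`. -/
def Compatible (m n : ℕ) (σ : List Bool) (R : Finset ℤ) : Prop :=
  R.card = m + n ∧ (0 : ℤ) ∈ R ∧ (∀ r ∈ R, 0 ≤ r) ∧
    ∀ p ∈ σ.zip (R.sort (· ≤ ·)),
      (p.1 = true → p.2 + (m : ℤ) ∈ R) ∧ (p.1 = false → p.2 - (n : ℤ) ∈ R)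

/-- The 1-based position of the `j`-th (1-based) occurrence of the letter `b` in the
word `w`; e.g. `nthPos w false j` is the position `σ⁻¹(W_j)` of the `j`-th `W`. -/
def nthPos (w : List Bool) (b : Bool) (j : ℕ) : ℕ :=
  ((List.range w.length).filter (fun p => w.getD p (!b) == b)).getD (j - 1) 0 + 1

/-- The positions `f_0 = 1` and `f_i = σ⁻¹(W_{f_{i-1}})`. -/
def fseq (σ : List Bool) : ℕ → ℕ
  | 0 => 1
  | i + 1 => nthPos σ false (fseq σ i)

/-- `𝔯_i`, the `i`-th smallest element of `R` (1-based). -/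
def sortedRank (R : Finset ℤ) (i : ℕ) : ℤ :=
  (R.sort (· ≤ ·)).getD (i - 1) 0

theorem getD_filter_lt {α : Type*} [LinearOrder α] (d : α) :
    ∀ (F : List α), F.Pairwise (· < ·) → ∀ q ∈ F,
      (F.filter (fun x => decide (x < q))).length < F.length ∧
      F.getD ((F.filter (fun x => decide (x < q))).length) d = q := by
  intro F
  induction F with
  | nil => intro _ q hq; simp at hq
  | cons a F ih =>
    intro hs q hq
    rw [List.pairwise_cons] at hs
    obtain ⟨ha, hs'⟩ := hs
    rcases List.mem_cons.mp hq with rfl | hq'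
    · have h1 : (F.filter (fun x => decide (x < q))) = [] := by
        apply List.filter_eq_nil_iff.mpr
        intro x hx
        simp only [decide_eq_true_eq]
        exact not_lt.mpr (le_of_lt (ha x hx))
      rw [List.filter_cons]
      simp [h1]
    · have haq : a < q := ha q hq'
      obtain ⟨ih1, ih2⟩ := ih hs' q hq'
      rw [List.filter_cons]
      simp only [haq, decide_true, if_pos]
      constructor
      · simpa using Nat.succ_lt_succ ih1
      · simpa using ih2

theorem period_bound {g : ℤ → ℤ} {R : Finset ℤ} {m n : ℕ} (hm : 0 < m) (hn : 0 < n)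
    (hcop : Nat.Coprime m n)
    (hstep : ∀ x ∈ R, g x = x + m ∨ g x = x - n)
    (hg : ∀ x ∈ R, g x ∈ R) :
    ∀ (ℓ : ℕ) (y : ℤ), y ∈ R → 0 < ℓ → g^[ℓ] y = y → m + n ≤ ℓ := by
  intro ℓ y hy hℓ hfix
  have hiter : ∀ j, g^[j] y ∈ R := by
    intro j
    induction j with
    | zero => simpa using hy
    | succ j ihj => rw [Function.iterate_succ_apply']; exact hg _ ihj
  have tele : ∑ j ∈ Finset.range ℓ, (g^[j+1] y - g^[j] y) = 0 := by
    rw [Finset.sum_range_sub (fun j => g^[j] y)]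
    simp [hfix]
  have hterm : ∀ j ∈ Finset.range ℓ, g^[j+1] y - g^[j] y =
      if g (g^[j] y) = g^[j] y + m then (m : ℤ) else -n := by
    intro j _
    rw [Function.iterate_succ_apply']
    rcases hstep _ (hiter j) with h | h
    · rw [if_pos h, h]; ring
    · have hne : ¬ (g (g^[j] y) = g^[j] y + m) := by
        rw [h]; intro hc
        have h1 : (m : ℤ) + n = 0 := by linarith
        have h2 : 0 < (m : ℤ) + n := by positivity
        omega
      rw [if_neg hne, h]; ring
  rw [Finset.sum_congr rfl hterm, Finset.sum_ite, Finset.sum_const, Finset.sum_const] at tele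
  set a := (Finset.filter (fun j => g (g^[j] y) = g^[j] y + m) (Finset.range ℓ)).card with ha
  set b := (Finset.filter (fun j => ¬ g (g^[j] y) = g^[j] y + m) (Finset.range ℓ)).card with hb
  have hab : a + b = ℓ := by
    rw [ha, hb]
    simpa using Finset.card_filter_add_card_filter_not
      (s := Finset.range ℓ) (fun j => g (g^[j] y) = g^[j] y + m)
  have hmn : (a : ℤ) * m = (b : ℤ) * n := by
    have : (a : ℤ) * m + (b : ℤ) * (-n) = 0 := by
      simpa [nsmul_eq_mul] using tele
    linarith
  have hnat : a * m = b * n := by exact_mod_cast hmn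
  have hapos : 0 < a := by
    rcases Nat.eq_zero_or_pos a with h0 | h; swap; · exact h
    exfalso
    rw [h0] at hnat hab
    simp at hnat hab
    omega
  have hbpos : 0 < b := by
    rcases Nat.eq_zero_or_pos b with h0 | h; swap; · exact h
    exfalso
    rw [h0] at hnat
    simp at hnat
    omega
  have hna : n ∣ a := by
    apply (Nat.Coprime.dvd_of_dvd_mul_right (hcop.symm))
    exact hnat ▸ ⟨b, Nat.mul_comm b n⟩
  have hmb : m ∣ b := by
    apply (Nat.Coprime.dvd_of_dvd_mul_right hcop)
    exact hnat.symm ▸ ⟨a, Nat.mul_comm a m⟩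
  have h1 : n ≤ a := Nat.le_of_dvd hapos hna
  have h2 : m ≤ b := Nat.le_of_dvd hbpos hmb
  omega

theorem surj_of_period_bound {g : ℤ → ℤ} {R : Finset ℤ}
    (hne : R.Nonempty) (hg : ∀ x ∈ R, g x ∈ R)
    (hper : ∀ (ℓ : ℕ) (y : ℤ), y ∈ R → 0 < ℓ → g^[ℓ] y = y → R.card ≤ ℓ) :
    ∀ z ∈ R, ∃ x ∈ R, g x = z := by
  obtain ⟨y0, hy0⟩ := hne
  have hiter : ∀ (y : ℤ), y ∈ R → ∀ j, g^[j] y ∈ R := by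
    intro y hy j
    induction j with
    | zero => simpa using hy
    | succ j ihj => rw [Function.iterate_succ_apply']; exact hg _ ihj
  obtain ⟨s, _, t, _, hst, heq⟩ :=
    Finset.exists_ne_map_eq_of_card_lt_of_maps_to
      (show R.card < (Finset.range (R.card + 1)).card by simp)
      (fun j _ => hiter y0 hy0 j)
  have hex : ∃ s t : ℕ, s < t ∧ g^[s] y0 = g^[t] y0 := by
    rcases hst.lt_or_gt with h | h
    · exact ⟨s, t, h, heq⟩
    · exact ⟨t, s, h, heq.symm⟩
  obtain ⟨s', t', hlt, heq'⟩ := hex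
  have hyR : g^[s'] y0 ∈ R := hiter y0 hy0 s'
  have hper0 : ∃ ℓ : ℕ, 0 < ℓ ∧ g^[ℓ] (g^[s'] y0) = g^[s'] y0 := by
    refine ⟨t' - s', by omega, ?_⟩
    rw [← Function.iterate_add_apply, Nat.sub_add_cancel (le_of_lt hlt)]
    exact heq'.symm
  set y := g^[s'] y0 with hydef
  classical
  set ℓ := Nat.find hper0 with hℓdef
  obtain ⟨hℓpos, hℓfix⟩ := Nat.find_spec hper0
  have hcard : R.card ≤ ℓ := hper ℓ y hyR hℓpos hℓfix
  have hinj : ∀ i j : ℕ, i < j → j < ℓ → g^[i] y ≠ g^[j] y := by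
    intro i j hij hjl hne'
    have hkey : g^[(ℓ - j + i)] y = y := by
      calc g^[ℓ - j + i] y = g^[ℓ - j] (g^[i] y) := Function.iterate_add_apply g _ i y
        _ = g^[ℓ - j] (g^[j] y) := by rw [hne']
        _ = g^[ℓ - j + j] y := (Function.iterate_add_apply g _ j y).symm
        _ = g^[ℓ] y := by rw [Nat.sub_add_cancel (le_of_lt hjl)]
        _ = y := hℓfix
    have hsmall : ℓ - j + i < ℓ := by omega
    exact Nat.find_min hper0 hsmall ⟨by omega, hkey⟩
  have hinjOn : Set.InjOn (fun j => g^[j] y) (Finset.range ℓ) := by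
    intro i hi j hj hij
    simp only [Finset.coe_range, Set.mem_Iio] at hi hj
    by_contra hne'
    rcases Nat.lt_or_ge i j with h | h
    · exact hinj i j h hj hij
    · have : j < i := by omega
      exact hinj j i this hi hij.symm
  set M := (Finset.range ℓ).image (fun j => g^[j] y) with hM
  have hMcard : M.card = ℓ := by
    rw [hM, Finset.card_image_of_injOn hinjOn, Finset.card_range]
  have hMsub : M ⊆ R := by
    intro z hz
    rw [hM, Finset.mem_image] at hz
    obtain ⟨j, _, rfl⟩ := hz
    exact hiter y hyR j
  have hMR : M = R := by
    apply Finset.eq_of_subset_of_card_le hMsub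
    rw [hMcard]; exact hcard
  intro z hz
  rw [← hMR, hM, Finset.mem_image] at hz
  obtain ⟨j, hj, hjz⟩ := hz
  rcases j with _ | j'
  · refine ⟨g^[ℓ - 1] y, hiter y hyR _, ?_⟩
    have hstep : g (g^[ℓ - 1] y) = g^[ℓ] y := by
      rw [← Function.iterate_succ_apply' g (ℓ - 1) y]
      congr 1
      omega
    rw [hstep, hℓfix]
    simpa using hjz
  · refine ⟨g^[j'] y, hiter y hyR _, ?_⟩
    rw [← Function.iterate_succ_apply' g j' y]
    exact hjz


/-- Let `m = kn + d` be coprime to `n` with `1 ≤ d ≤ n-1` and `k ≥ 1`.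
If the set `R` is compatible with the word `σ` of `n` `S`'s and `m` `W`'s, then the
ranks `0, n, 2n, …, (k+1)n` all belong to `R`, and `𝔯_{f_i} = i·n` for `0 ≤ i ≤ k+1`,
where `f_0 = 1` and `f_i = σ⁻¹(W_{f_{i-1}})`. -/
theorem compatible_positions_of_multiples (m n k d : ℕ) (hn : 0 < n)
    (hd1 : 1 ≤ d) (hd2 : d ≤ n - 1) (hk : 1 ≤ k) (hmd : m = k * n + d)
    (hcop : Nat.Coprime m n) (σ : List Bool) (hlen : σ.length = m + n)
    (hcount : σ.count true = n) (R : Finset ℤ) (hcomp : Compatible m n σ R) :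
    (∀ i ≤ k + 1, ((i * n : ℕ) : ℤ) ∈ R) ∧
    (∀ i ≤ k + 1, sortedRank R (fseq σ i) = ((i * n : ℕ) : ℤ)) := by
  classical
  obtain ⟨hcard, h0R, hRpos, hzip⟩ := hcomp
  have hm : 0 < m := by omega
  set L := R.sort (· ≤ ·) with hLdef
  have hLlen : L.length = m + n := by rw [hLdef, Finset.length_sort]; exact hcard
  have hLsort : L.Pairwise (· < ·) := (Finset.sortedLT_sort R).pairwise
  have hLmem : ∀ x : ℤ, x ∈ L ↔ x ∈ R := fun x => Finset.mem_sort _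
  have hpw : ∀ (i j : ℕ) (_ : i < L.length) (hj : j < L.length), i < j → L[i] < L[j] :=
    List.pairwise_iff_getElem.mp hLsort
  set ix : ℤ → ℕ := fun v => (L.filter (fun x => decide (x < v))).length with hixdef
  have hix : ∀ v ∈ R, ix v < L.length ∧ L.getD (ix v) 0 = v := by
    intro v hv
    exact getD_filter_lt 0 L hLsort v ((hLmem v).mpr hv)
  -- get and ix relations
  have hgetmem : ∀ (j : ℕ) (hj : j < L.length), L.getD j 0 ∈ R := by
    intro j hj
    rw [List.getD_eq_getElem _ _ hj]
    exact (hLmem _).mp (List.getElem_mem hj)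
  have hgetlt : ∀ (i j : ℕ) (_ : i < j) (hj : j < L.length), L.getD i 0 < L.getD j 0 := by
    intro i j hij hj
    have hi : i < L.length := lt_trans hij hj
    rw [List.getD_eq_getElem _ _ hi, List.getD_eq_getElem _ _ hj]
    exact hpw i j hi hj hij
  have ixget : ∀ (j : ℕ) (hj : j < L.length), ix (L.getD j 0) = j := by
    intro j hj
    obtain ⟨h1, h2⟩ := hix (L.getD j 0) (hgetmem j hj)
    rcases Nat.lt_trichotomy (ix (L.getD j 0)) j with h | h | h
    · exact absurd (h2 ▸ hgetlt _ j h hj) (lt_irrefl _)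
    · exact h
    · exact absurd (h2 ▸ hgetlt j _ h h1) (lt_irrefl _)
  have ixlt : ∀ u ∈ R, ∀ v ∈ R, u < v → ix u < ix v := by
    intro u hu v hv huv
    obtain ⟨hu1, hu2⟩ := hix u hu
    obtain ⟨hv1, hv2⟩ := hix v hv
    rcases Nat.lt_trichotomy (ix u) (ix v) with h | h | h
    · exact h
    · exfalso; rw [h, hv2] at hu2; omega
    · exfalso
      have := hgetlt _ _ h hu1
      rw [hu2, hv2] at this
      omega
  -- letters and compatibility
  set lt? : ℤ → Bool := fun v => σ.getD (ix v) true with hltdef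
  have hSW : ∀ v ∈ R, (lt? v = true → v + m ∈ R) ∧ (lt? v = false → v - n ∈ R) := by
    intro v hv
    obtain ⟨h1, h2⟩ := hix v hv
    have hσj : ix v < σ.length := by rw [hlen]; omega
    have hzl : ix v < (σ.zip L).length := by
      rw [List.length_zip]; omega
    have hpair : (σ[ix v], L[ix v]) ∈ σ.zip L := by
      rw [← List.getElem_zip (h := hzl)]
      exact List.getElem_mem hzl
    have := hzip _ hpair
    have hgd : σ.getD (ix v) true = σ[ix v] := List.getD_eq_getElem σ true hσj
    have hLv : L[ix v] = v := by rw [← List.getD_eq_getElem L 0 (by omega : ix v < L.length)]; exact h2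
    rw [hLv] at this
    constructor
    · intro ht; exact this.1 (by rw [← hgd]; exact ht)
    · intro ht; exact this.2 (by rw [← hgd]; exact ht)
  set g : ℤ → ℤ := fun v => if lt? v then v + m else v - n with hgdef
  have hgmem : ∀ x ∈ R, g x ∈ R := by
    intro x hx
    rcases Bool.eq_false_or_eq_true (lt? x) with h | h
    · rw [hgdef]; simp only [h]; simpa using (hSW x hx).1 h
    · rw [hgdef]; simp only [h]; simpa using (hSW x hx).2 h
  have hgstep : ∀ x ∈ R, g x = x + m ∨ g x = x - n := by
    intro x _
    rcases Bool.eq_false_or_eq_true (lt? x) with h | h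
    · left; rw [hgdef]; simp [h]
    · right; rw [hgdef]; simp [h]
  have hsurj : ∀ z ∈ R, ∃ x ∈ R, g x = z := by
    apply surj_of_period_bound ⟨0, h0R⟩ hgmem
    intro ℓ y hy hl hfix
    rw [hcard]
    exact period_bound hm hn hcop hgstep hgmem ℓ y hy hl hfix
  -- key corollary
  have hKC : ∀ z ∈ R, z < (m : ℤ) → z + n ∈ R ∧ lt? (z + n) = false := by
    intro z hz hzm
    obtain ⟨x, hx, hgx⟩ := hsurj z hz
    rcases Bool.eq_false_or_eq_true (lt? x) with h | h
    · exfalso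
      have : g x = x + m := by rw [hgdef]; simp [h]
      rw [this] at hgx
      have := hRpos x hx
      omega
    · have : g x = x - n := by rw [hgdef]; simp [h]
      rw [this] at hgx
      have hxz : x = z + n := by omega
      rw [← hxz]
      exact ⟨hx, h⟩
  -- main invariant by induction
  have hInv : ∀ i : ℕ, i ≤ k + 1 →
      ((i * n : ℕ) : ℤ) ∈ R ∧ fseq σ i = ix ((i * n : ℕ) : ℤ) + 1 := by
    intro i
    induction i with
    | zero =>
      intro _
      simp only [Nat.zero_mul, Nat.cast_zero]
      refine ⟨h0R, ?_⟩
      have : ix (0 : ℤ) = 0 := by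
        rw [hixdef]
        simp only []
        have : L.filter (fun x => decide (x < (0:ℤ))) = [] := by
          apply List.filter_eq_nil_iff.mpr
          intro x hx
          simp only [decide_eq_true_eq]
          exact not_lt.mpr (hRpos x ((hLmem x).mp hx))
        rw [this]
        rfl
      rw [this]
      rfl
    | succ i ih =>
      intro hik
      obtain ⟨htR, hfi⟩ := ih (by omega)
      set t : ℤ := ((i * n : ℕ) : ℤ) with htdef
      have htm : t < (m : ℤ) := by
        have h1 : i * n ≤ k * n := Nat.mul_le_mul_right n (by omega)
        have h2 : i * n < m := by omega
        rw [htdef]; exact_mod_cast h2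
      obtain ⟨ht'R, hlt'⟩ := hKC t htR htm
      have hcast : (((i + 1) * n : ℕ) : ℤ) = t + n := by
        rw [htdef]; push_cast; ring
      have htn : t + (n : ℤ) ∈ R := ht'R
      refine ⟨by rw [hcast]; exact htn, ?_⟩
      -- compute fseq step
      have hq1 : ix (t + n) < L.length := (hix _ htn).1
      have hq1' : ix (t + n) < m + n := by omega
      -- the list of W positions
      set F : List ℕ := (List.range σ.length).filter (fun p => σ.getD p true == false) with hFdef
      have hFsort : F.Pairwise (· < ·) :=
        List.Pairwise.sublist List.filter_sublist List.pairwise_lt_range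
      have hqF : ix (t + n) ∈ F := by
        rw [hFdef, List.mem_filter, List.mem_range, hlen]
        exact ⟨hq1', by rw [show σ.getD (ix (t+n)) true = lt? (t+n) from rfl, hlt']; rfl⟩
      obtain ⟨hc1, hc2⟩ := getD_filter_lt 0 F hFsort _ hqF
      -- count: the number of W positions before ix (t+n) equals ix t
      have hcount2 : (F.filter (fun x => decide (x < ix (t + n)))).length = ix t := by
        have hnodup : (F.filter (fun x => decide (x < ix (t + n)))).Nodup := by
          apply List.Nodup.sublist List.filter_sublist
          exact List.Nodup.sublist List.filter_sublist List.nodup_range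
        rw [← List.toFinset_card_of_nodup hnodup]
        have hset : (F.filter (fun x => decide (x < ix (t + n)))).toFinset =
            (Finset.range (m + n)).filter
              (fun j => σ.getD j true = false ∧ j < ix (t + n)) := by
          ext j
          simp only [List.mem_toFinset, List.mem_filter, hFdef, List.mem_range,
            Finset.mem_filter, Finset.mem_range, hlen, decide_eq_true_eq, beq_iff_eq]
          tauto
        rw [hset]
        rw [show ix t = (Finset.range (ix t)).card from (Finset.card_range _).symm]
        apply Finset.card_bij' (fun j _ => ix (L.getD j 0 - n)) (fun r _ => ix (L.getD r 0 + n))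
        · -- forward maps into range (ix t)
          intro j hj
          rw [Finset.mem_filter, Finset.mem_range] at hj
          obtain ⟨hjN, hjW, hjq⟩ := hj
          have hjL : j < L.length := by omega
          have hvj : L.getD j 0 ∈ R := hgetmem j hjL
          have hlvj : lt? (L.getD j 0) = false := by
            rw [hltdef]; simp only []; rw [ixget j hjL]; exact hjW
          have hvjn : L.getD j 0 - n ∈ R := (hSW _ hvj).2 hlvj
          have hvjlt : L.getD j 0 < t + n := by
            have := hgetlt j (ix (t + n)) hjq hq1
            rw [(hix _ htn).2] at this
            exact this
          have : L.getD j 0 - n < t := by omega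
          rw [Finset.mem_range]
          have := ixlt _ hvjn _ htR this
          exact this
        · -- backward maps into the filter
          intro r hr
          rw [Finset.mem_range] at hr
          have hixtL : ix t < L.length := (hix _ htR).1
          have hrL : r < L.length := by omega
          have hu : L.getD r 0 ∈ R := hgetmem r hrL
          have hult : L.getD r 0 < t := by
            have := hgetlt r (ix t) hr hixtL
            rw [(hix _ htR).2] at this
            exact this
          have hum : L.getD r 0 < (m : ℤ) := by omega
          obtain ⟨hun, hlun⟩ := hKC _ hu hum
          rw [Finset.mem_filter, Finset.mem_range]
          have hixun : ix (L.getD r 0 + n) < L.length := (hix _ hun).1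
          refine ⟨by omega, ?_, ?_⟩
          · rw [show σ.getD (ix (L.getD r 0 + n)) true = lt? (L.getD r 0 + n) from rfl]
            exact hlun
          · apply ixlt _ hun _ htn
            omega
        · -- left inverse
          intro j hj
          rw [Finset.mem_filter, Finset.mem_range] at hj
          obtain ⟨hjN, hjW, hjq⟩ := hj
          have hjL : j < L.length := by omega
          have hvj : L.getD j 0 ∈ R := hgetmem j hjL
          have hlvj : lt? (L.getD j 0) = false := by
            rw [hltdef]; simp only []; rw [ixget j hjL]; exact hjW
          have hvjn : L.getD j 0 - n ∈ R := (hSW _ hvj).2 hlvj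
          rw [(hix _ hvjn).2]
          have : L.getD j 0 - n + n = L.getD j 0 := by ring
          rw [this]
          exact ixget j hjL
        · -- right inverse
          intro r hr
          rw [Finset.mem_range] at hr
          have hixtL : ix t < L.length := (hix _ htR).1
          have hrL : r < L.length := by omega
          have hu : L.getD r 0 ∈ R := hgetmem r hrL
          have hult : L.getD r 0 < t := by
            have := hgetlt r (ix t) hr hixtL
            rw [(hix _ htR).2] at this
            exact this
          have hum : L.getD r 0 < (m : ℤ) := by omega
          obtain ⟨hun, _⟩ := hKC _ hu hum
          rw [(hix _ hun).2]
          have : L.getD r 0 + n - n = L.getD r 0 := by ring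
          rw [this]
          exact ixget r hrL
      -- finish the step
      have : fseq σ (i + 1) = nthPos σ false (fseq σ i) := rfl
      rw [this, hfi]
      rw [hcast]
      show ((List.range σ.length).filter (fun p => σ.getD p (!false) == false)).getD
          (ix t + 1 - 1) 0 + 1 = ix (t + n) + 1
      have hnf : (!false) = true := rfl
      rw [hnf]
      have : ix t + 1 - 1 = ix t := by omega
      rw [this, ← hFdef, ← hcount2, hc2]
  constructor
  · intro i hi; exact (hInv i hi).1
  · intro i hi
    obtain ⟨hiR, hfi⟩ := hInv i hi
    show (R.sort (· ≤ ·)).getD (fseq σ i - 1) 0 = ((i * n : ℕ) : ℤ)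
    rw [← hLdef, hfi]
    have : ix ((i * n : ℕ) : ℤ) + 1 - 1 = ix ((i * n : ℕ) : ℤ) := by omega
    rw [this]
    exact (hix _ hiR).2
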